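/- (Moment identities for two topics with two words per document, and finiteness of the equivalence class.) Let K = 2, m = 2 and c_0 > 0. If θ = (θ_1,θ_2) ∈ Θ_{c_0} and θ′ = (θ′_1,θ′_2) ∈ Θ_{c_0} satisfy p_{θ,2}(x) = p_{θ′,2}(x) for all x ∈ [V]², then for every ℓ ∈ [V]: θ_1(ℓ) + θ_2(ℓ) = θ′_1(ℓ) + θ′_2(ℓ) and θ_1(ℓ)·θ_2(ℓ) = θ′_1(ℓ)·θ′_2(ℓ). Consequently, the set {θ′ ∈ Θ_{c_0} : p_{θ′,2}(x) = p_{θ,2}(x) for all x ∈ [V]²} has cardinality at most 2^V. -/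

import Mathlib

open MeasureTheory Filter

noncomputable section

namespace TopicModel

/-- The probability simplex in `ℝ^K`. -/
def simplex (K : ℕ) : Set (Fin K → ℝ) := {h | (∀ k, 0 ≤ h k) ∧ ∑ k, h k = 1}

/-- The parameter set `Θ_{c₀}`: `K` topic vectors, each a probability vector on `[V]`
with all entries at least `c₀`. -/
def Theta (c0 : ℝ) (V K : ℕ) : Set (Fin K → Fin V → ℝ) :=
  {θ | (∀ k ℓ, c0 ≤ θ k ℓ) ∧ ∀ k, ∑ ℓ, θ k ℓ = 1}

/-- `θ` is a tuple of probability vectors. -/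
def IsParam {V K : ℕ} (θ : Fin K → Fin V → ℝ) : Prop :=
  (∀ k ℓ, 0 ≤ θ k ℓ) ∧ ∀ k, ∑ ℓ, θ k ℓ = 1

/-- Word probability `p_{θ,h}(v) = Σ_k h_k θ_k(v)`. -/
def pWord {V K : ℕ} (θ : Fin K → Fin V → ℝ) (h : Fin K → ℝ) (v : Fin V) : ℝ :=
  ∑ k, h k * θ k v

/-- Document probability given mixing vector `h`: `p_{θ,h}(x) = Π_i p_{θ,h}(x_i)`. -/
def pDoc {V K : ℕ} (m : ℕ) (θ : Fin K → Fin V → ℝ) (h : Fin K → ℝ)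
    (x : Fin m → Fin V) : ℝ :=
  ∏ i, pWord θ h (x i)

/-- Marginal document probability `p_{θ,m}(x) = ∫ p_{θ,h}(x) dν₀(h)`. -/
def pM {V K : ℕ} (ν0 : Measure (Fin K → ℝ)) (m : ℕ) (θ : Fin K → Fin V → ℝ)
    (x : Fin m → Fin V) : ℝ :=
  ∫ h, pDoc m θ h x ∂ν0

/-- `ℓ¹`-norm of a `K × V` array: `‖δ‖₁ = Σ_k Σ_ℓ |δ_k(ℓ)|`. -/
def norm1 {V K : ℕ} (δ : Fin K → Fin V → ℝ) : ℝ := ∑ k, ∑ ℓ, |δ k ℓ|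

/-- Wasserstein distance between parameters:
`d_W(θ,θ') = min_π Σ_k ‖θ_k − θ'_{π(k)}‖₁`. -/
def dW {V K : ℕ} (θ θ' : Fin K → Fin V → ℝ) : ℝ :=
  ⨅ π : Equiv.Perm (Fin K), ∑ k, ∑ ℓ, |θ k ℓ - θ' (π k) ℓ|

/-- `L¹` distance between the document pmfs of two parameters. -/
def distL1 {V K : ℕ} (ν0 : Measure (Fin K → ℝ)) (m : ℕ)
    (θ θ' : Fin K → Fin V → ℝ) : ℝ :=
  ∑ x : Fin m → Fin V, |pM ν0 m θ x - pM ν0 m θ' x|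

/-- The `p`-th order degeneracy criterion `𝔡_{m,p}(θ)`: the infimum over all
`δ` with `‖δ‖₁ = 1` and `Σ_ℓ δ_k(ℓ) = 0` for every `k`, of
`Σ_{x ∈ [V]^m} |∫ p_{θ,h}(x) Σ_{i₁<⋯<i_p} Π_t (δ_h(x_{i_t}) / p_{θ,h}(x_{i_t})) dν₀|`. -/
def degen {V K : ℕ} (ν0 : Measure (Fin K → ℝ)) (m : ℕ) (θ : Fin K → Fin V → ℝ)
    (p : ℕ) : ℝ :=
  sInf {r : ℝ | ∃ δ : Fin K → Fin V → ℝ, norm1 δ = 1 ∧ (∀ k, ∑ ℓ, δ k ℓ = 0) ∧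
    r = ∑ x : Fin m → Fin V,
      |∫ h, pDoc m θ h x *
        ∑ S ∈ Finset.powersetCard p (Finset.univ : Finset (Fin m)),
          ∏ i ∈ S, ((∑ k, h k * δ k (x i)) / pWord θ h (x i)) ∂ν0|}

/-- The order of degeneracy `𝔭(m;θ) ∈ ℕ ∪ {∞}`:
the least `p ∈ {1,…,m}` with `𝔡_{m,p}(θ) > 0`, or `∞` if none exists. -/
def pOrder {V K : ℕ} (ν0 : Measure (Fin K → ℝ)) (m : ℕ) (θ : Fin K → Fin V → ℝ) : ℕ∞ :=
  sInf ((↑) '' {p : ℕ | 1 ≤ p ∧ p ≤ m ∧ 0 < degen ν0 m θ p})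

/-- Assumption (A2) on the mixing measure `ν₀`: a Borel probability measure supported on the
simplex, exchangeable, with `E[h₁²] > E[h₁h₂]` and (when `K ≥ 3`)
`E[h₁³] + 2E[h₁h₂h₃] > 3E[h₁²h₂]`. -/
structure NiceMixing (K : ℕ) (ν0 : Measure (Fin K → ℝ)) : Prop where
  prob : IsProbabilityMeasure ν0
  support : ν0 (simplex K)ᶜ = 0
  exch : ∀ π : Equiv.Perm (Fin K), Measure.map (fun h => h ∘ π) ν0 = ν0
  mom2 : ∀ i j : Fin K, i ≠ j → ∫ h, h i * h j ∂ν0 < ∫ h, h i ^ 2 ∂ν0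
  mom3 : ∀ i j k : Fin K, i ≠ j → j ≠ k → i ≠ k →
    3 * ∫ h, h i ^ 2 * h j ∂ν0 < ∫ h, h i ^ 3 ∂ν0 + 2 * ∫ h, h i * h j * h k ∂ν0

/-- The equivalence class `Θ̃_{c₀}(θ)` of parameters inducing the same document pmf as `θ`. -/
def equivClass {V K : ℕ} (ν0 : Measure (Fin K → ℝ)) (m : ℕ) (c0 : ℝ)
    (θ : Fin K → Fin V → ℝ) : Set (Fin K → Fin V → ℝ) :=
  {θ' | θ' ∈ Theta c0 V K ∧ ∀ x : Fin m → Fin V, pM ν0 m θ' x = pM ν0 m θ x}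

/-- Probability of the event `A` under `n` i.i.d. draws from the pmf `p` on a finite set. -/
def prodProb {α : Type*} [Fintype α] (p : α → ℝ) (n : ℕ) (A : Set (Fin n → α)) : ℝ :=
  ∑ xs : Fin n → α, A.indicator (fun ys => ∏ i, p (ys i)) xs

end TopicModel

namespace TopicModel

lemma ae_simplex {K : ℕ} {ν0 : Measure (Fin K → ℝ)} (h : NiceMixing K ν0) :
    ∀ᵐ x ∂ν0, x ∈ simplex K := by
  rw [ae_iff]
  exact h.support

lemma bound01 {K : ℕ} {x : Fin K → ℝ} (hx : x ∈ simplex K) (i : Fin K) :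
    0 ≤ x i ∧ x i ≤ 1 := by
  refine ⟨hx.1 i, ?_⟩
  calc x i ≤ ∑ k, x k := Finset.single_le_sum (fun k _ => hx.1 k) (Finset.mem_univ i)
  _ = 1 := hx.2

lemma integ_mul {K : ℕ} {ν0 : Measure (Fin K → ℝ)} (h : NiceMixing K ν0) (i j : Fin K) :
    Integrable (fun x => x i * x j) ν0 := by
  haveI := h.prob
  refine Integrable.mono' (integrable_const 1)
    (((measurable_pi_apply i).mul (measurable_pi_apply j)).aestronglyMeasurable) ?_
  filter_upwards [ae_simplex h] with x hx
  have hi := bound01 hx i; have hj := bound01 hx j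
  rw [Real.norm_eq_abs, abs_mul, abs_of_nonneg hi.1, abs_of_nonneg hj.1]
  nlinarith [hi.1, hi.2, hj.1, hj.2]

lemma mom_swap {ν0 : Measure (Fin 2 → ℝ)} (h : NiceMixing 2 ν0) (π : Equiv.Perm (Fin 2))
    (i j : Fin 2) :
    ∫ x, x i * x j ∂ν0 = ∫ x, x (π i) * x (π j) ∂ν0 := by
  conv_lhs => rw [← h.exch π]
  rw [integral_map
    (show Measurable (fun h : Fin 2 → ℝ => h ∘ π) from
      measurable_pi_lambda _ (fun k => measurable_pi_apply (π k))).aemeasurable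
    (show Measurable (fun x : Fin 2 → ℝ => x i * x j) from
      (measurable_pi_apply i).mul (measurable_pi_apply j)).aestronglyMeasurable]
  rfl

lemma mom_sum {ν0 : Measure (Fin 2 → ℝ)} (h : NiceMixing 2 ν0) :
    (∫ x, x 0 * x 0 ∂ν0) + (∫ x, x 0 * x 1 ∂ν0) + (∫ x, x 1 * x 0 ∂ν0)
      + (∫ x, x 1 * x 1 ∂ν0) = 1 := by
  haveI := h.prob
  have h1 : ∫ x, (x 0 * x 0 + x 0 * x 1 + x 1 * x 0 + x 1 * x 1 : ℝ) ∂ν0 = 1 := by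
    rw [show (1:ℝ) = ∫ _x, (1:ℝ) ∂ν0 by simp]
    apply integral_congr_ae
    filter_upwards [ae_simplex h] with x hx
    have h2 := hx.2
    rw [Fin.sum_univ_two] at h2
    nlinarith [h2]
  have e1 : ∫ x, (x 0 * x 0 + x 0 * x 1 + x 1 * x 0 + x 1 * x 1 : ℝ) ∂ν0
      = ∫ x, (x 0 * x 0 + x 0 * x 1 + x 1 * x 0 : ℝ) ∂ν0 + ∫ x, x 1 * x 1 ∂ν0 :=
    integral_add (((integ_mul h 0 0).add (integ_mul h 0 1)).add (integ_mul h 1 0))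
      (integ_mul h 1 1)
  have e2 : ∫ x, (x 0 * x 0 + x 0 * x 1 + x 1 * x 0 : ℝ) ∂ν0
      = ∫ x, (x 0 * x 0 + x 0 * x 1 : ℝ) ∂ν0 + ∫ x, x 1 * x 0 ∂ν0 :=
    integral_add ((integ_mul h 0 0).add (integ_mul h 0 1)) (integ_mul h 1 0)
  have e3 : ∫ x, (x 0 * x 0 + x 0 * x 1 : ℝ) ∂ν0
      = ∫ x, x 0 * x 0 ∂ν0 + ∫ x, x 0 * x 1 ∂ν0 :=
    integral_add (integ_mul h 0 0) (integ_mul h 0 1)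
  linarith [h1, e1, e2, e3]


lemma pM_expand {V : ℕ} {ν0 : Measure (Fin 2 → ℝ)} (h : NiceMixing 2 ν0)
    (θ : Fin 2 → Fin V → ℝ) (x : Fin 2 → Fin V) :
    pM ν0 2 θ x =
      (∫ y, y 0 * y 0 ∂ν0) * (θ 0 (x 0) * θ 0 (x 1))
      + (∫ y, y 0 * y 1 ∂ν0) * (θ 0 (x 0) * θ 1 (x 1))
      + (∫ y, y 1 * y 0 ∂ν0) * (θ 1 (x 0) * θ 0 (x 1))
      + (∫ y, y 1 * y 1 ∂ν0) * (θ 1 (x 0) * θ 1 (x 1)) := by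
  have hfun : (fun y : Fin 2 → ℝ => pDoc 2 θ y x)
      = fun y => y 0 * y 0 * (θ 0 (x 0) * θ 0 (x 1))
        + y 0 * y 1 * (θ 0 (x 0) * θ 1 (x 1))
        + y 1 * y 0 * (θ 1 (x 0) * θ 0 (x 1))
        + y 1 * y 1 * (θ 1 (x 0) * θ 1 (x 1)) := by
    funext y
    simp only [pDoc, pWord, Fin.prod_univ_two, Fin.sum_univ_two]
    ring
  rw [pM, hfun]
  have e1 : ∫ y, (y 0 * y 0 * (θ 0 (x 0) * θ 0 (x 1))
        + y 0 * y 1 * (θ 0 (x 0) * θ 1 (x 1))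
        + y 1 * y 0 * (θ 1 (x 0) * θ 0 (x 1))
        + y 1 * y 1 * (θ 1 (x 0) * θ 1 (x 1)) : ℝ) ∂ν0
      = ∫ y, (y 0 * y 0 * (θ 0 (x 0) * θ 0 (x 1))
        + y 0 * y 1 * (θ 0 (x 0) * θ 1 (x 1))
        + y 1 * y 0 * (θ 1 (x 0) * θ 0 (x 1)) : ℝ) ∂ν0
        + ∫ y, y 1 * y 1 * (θ 1 (x 0) * θ 1 (x 1)) ∂ν0 :=
    integral_add ((((integ_mul h 0 0).mul_const _).add
        ((integ_mul h 0 1).mul_const _)).add ((integ_mul h 1 0).mul_const _))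
      ((integ_mul h 1 1).mul_const _)
  have e2 : ∫ y, (y 0 * y 0 * (θ 0 (x 0) * θ 0 (x 1))
        + y 0 * y 1 * (θ 0 (x 0) * θ 1 (x 1))
        + y 1 * y 0 * (θ 1 (x 0) * θ 0 (x 1)) : ℝ) ∂ν0
      = ∫ y, (y 0 * y 0 * (θ 0 (x 0) * θ 0 (x 1))
        + y 0 * y 1 * (θ 0 (x 0) * θ 1 (x 1)) : ℝ) ∂ν0
        + ∫ y, y 1 * y 0 * (θ 1 (x 0) * θ 0 (x 1)) ∂ν0 :=
    integral_add (((integ_mul h 0 0).mul_const _).add ((integ_mul h 0 1).mul_const _))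
      ((integ_mul h 1 0).mul_const _)
  have e3 : ∫ y, (y 0 * y 0 * (θ 0 (x 0) * θ 0 (x 1))
        + y 0 * y 1 * (θ 0 (x 0) * θ 1 (x 1)) : ℝ) ∂ν0
      = ∫ y, y 0 * y 0 * (θ 0 (x 0) * θ 0 (x 1)) ∂ν0
        + ∫ y, y 0 * y 1 * (θ 0 (x 0) * θ 1 (x 1)) ∂ν0 :=
    integral_add ((integ_mul h 0 0).mul_const _) ((integ_mul h 0 1).mul_const _)
  rw [e1, e2, e3, integral_mul_const, integral_mul_const, integral_mul_const,
    integral_mul_const]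

/-- **Moment identities for two topics with two words per document, and finiteness of the
equivalence class.** If `θ, θ' ∈ Θ_{c₀}` (with `K = 2`, `m = 2`) induce the same document
pmf, then coordinatewise `θ₁ + θ₂ = θ'₁ + θ'₂` and `θ₁·θ₂ = θ'₁·θ'₂`; consequently the
equivalence class of `θ` has cardinality at most `2^V`. -/
theorem two_topic_moment_identities
    {V : ℕ} (hV : 2 ≤ V) {c0 : ℝ} (hc0 : 0 < c0)
    (ν0 : Measure (Fin 2 → ℝ)) (hν0 : NiceMixing 2 ν0)
    (θ θ' : Fin 2 → Fin V → ℝ) (hθ : θ ∈ Theta c0 V 2) (hθ' : θ' ∈ Theta c0 V 2)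
    (heq : ∀ x : Fin 2 → Fin V, pM ν0 2 θ x = pM ν0 2 θ' x) :
    (∀ ℓ : Fin V, θ 0 ℓ + θ 1 ℓ = θ' 0 ℓ + θ' 1 ℓ) ∧
    (∀ ℓ : Fin V, θ 0 ℓ * θ 1 ℓ = θ' 0 ℓ * θ' 1 ℓ) ∧
    (equivClass ν0 2 c0 θ).Finite ∧ Nat.card (equivClass ν0 2 c0 θ) ≤ 2 ^ V := by
  classical
  set a := ∫ x, x 0 * x 0 ∂ν0 with ha
  set b := ∫ x, x 0 * x 1 ∂ν0 with hb
  have h11 : (∫ x, x 1 * x 1 ∂ν0) = a := by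
    have := mom_swap hν0 (Equiv.swap 0 1) 1 1
    simpa [Equiv.swap_apply_right, ← ha] using this
  have h10 : (∫ x, x 1 * x 0 ∂ν0) = b := by
    have := mom_swap hν0 (Equiv.swap 0 1) 1 0
    simpa [Equiv.swap_apply_left, Equiv.swap_apply_right, ← hb] using this
  have hsum := mom_sum hν0
  rw [h11, h10] at hsum
  have hab : a + b = 1 / 2 := by linarith
  have hba : b < a := by
    have h2 := hν0.mom2 0 1 (by decide)
    have : (∫ x : Fin 2 → ℝ, x 0 ^ 2 ∂ν0) = a := by
      rw [ha]; congr 1; funext x; ring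
    linarith [h2, this.symm.le, this.le]
  have key : ∀ τ σ : Fin 2 → Fin V → ℝ, τ ∈ Theta c0 V 2 → σ ∈ Theta c0 V 2 →
      (∀ x : Fin 2 → Fin V, pM ν0 2 τ x = pM ν0 2 σ x) →
      (∀ ℓ, τ 0 ℓ + τ 1 ℓ = σ 0 ℓ + σ 1 ℓ) ∧
      (∀ ℓ, τ 0 ℓ * τ 1 ℓ = σ 0 ℓ * σ 1 ℓ) := by
    intro τ σ hτ hσ hpm
    have hrow : ∀ ρ : Fin 2 → Fin V → ℝ, ρ ∈ Theta c0 V 2 → ∀ u : Fin V,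
        ∑ v : Fin V, pM ν0 2 ρ ![u, v] = (a + b) * (ρ 0 u + ρ 1 u) := by
      intro ρ hρ u
      have : ∀ v : Fin V, pM ν0 2 ρ ![u, v]
          = a * (ρ 0 u * ρ 0 v) + b * (ρ 0 u * ρ 1 v)
            + b * (ρ 1 u * ρ 0 v) + a * (ρ 1 u * ρ 1 v) := by
        intro v
        rw [pM_expand hν0]
        simp only [Matrix.cons_val_zero, Matrix.cons_val_one, Matrix.head_cons, h11, h10, ← ha, ← hb]
      rw [Finset.sum_congr rfl (fun v _ => this v)]
      rw [Finset.sum_add_distrib, Finset.sum_add_distrib, Finset.sum_add_distrib]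
      have t0 := hρ.2 0
      have t1 := hρ.2 1
      have c1 : ∑ v : Fin V, a * (ρ 0 u * ρ 0 v) = a * ρ 0 u := by
        rw [← Finset.mul_sum, ← Finset.mul_sum, t0, mul_one]
      have c2 : ∑ v : Fin V, b * (ρ 0 u * ρ 1 v) = b * ρ 0 u := by
        rw [← Finset.mul_sum, ← Finset.mul_sum, t1, mul_one]
      have c3 : ∑ v : Fin V, b * (ρ 1 u * ρ 0 v) = b * ρ 1 u := by
        rw [← Finset.mul_sum, ← Finset.mul_sum, t0, mul_one]
      have c4 : ∑ v : Fin V, a * (ρ 1 u * ρ 1 v) = a * ρ 1 u := by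
        rw [← Finset.mul_sum, ← Finset.mul_sum, t1, mul_one]
      rw [c1, c2, c3, c4]; ring
    have hs : ∀ ℓ, τ 0 ℓ + τ 1 ℓ = σ 0 ℓ + σ 1 ℓ := by
      intro u
      have h1 := hrow τ hτ u
      have h2 := hrow σ hσ u
      have h3 : ∑ v : Fin V, pM ν0 2 τ ![u, v] = ∑ v : Fin V, pM ν0 2 σ ![u, v] :=
        Finset.sum_congr rfl (fun v _ => hpm ![u, v])
      have h4 : (a + b) * (τ 0 u + τ 1 u) = (a + b) * (σ 0 u + σ 1 u) := by
        rw [← h1, ← h2, h3]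
      have hne : a + b ≠ 0 := by rw [hab]; norm_num
      exact mul_left_cancel₀ hne h4
    refine ⟨hs, fun u => ?_⟩
    have hqq := hpm ![u, u]
    rw [pM_expand hν0, pM_expand hν0] at hqq
    simp only [Matrix.cons_val_zero, Matrix.cons_val_one, Matrix.head_cons, h11, h10, ← ha, ← hb] at hqq
    have hsu := hs u
    have hcancel : (a - b) * (τ 0 u * τ 1 u) = (a - b) * (σ 0 u * σ 1 u) := by
      linear_combination (-(1:ℝ)/2) * hqq
        + (a / 2) * (τ 0 u + τ 1 u + σ 0 u + σ 1 u) * hsu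
    exact mul_left_cancel₀ (sub_ne_zero.mpr hba.ne') hcancel
  obtain ⟨hs, hq⟩ := key θ θ' hθ hθ' heq
  refine ⟨hs, hq, ?_⟩
  have hmem : ∀ τ ∈ equivClass ν0 2 c0 θ,
      (∀ ℓ, τ 0 ℓ + τ 1 ℓ = θ 0 ℓ + θ 1 ℓ) ∧
      (∀ ℓ, τ 0 ℓ * τ 1 ℓ = θ 0 ℓ * θ 1 ℓ) :=
    fun τ hτ => key τ θ hτ.1 hθ hτ.2
  have hroot : ∀ τ ∈ equivClass ν0 2 c0 θ, ∀ ℓ, τ 0 ℓ = θ 0 ℓ ∨ τ 0 ℓ = θ 1 ℓ := by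
    intro τ hτ ℓ
    obtain ⟨hs', hq'⟩ := hmem τ hτ
    have h0 : (τ 0 ℓ - θ 0 ℓ) * (τ 0 ℓ - θ 1 ℓ) = 0 := by
      linear_combination (τ 0 ℓ) * hs' ℓ - hq' ℓ
    rcases mul_eq_zero.mp h0 with h | h
    · exact Or.inl (by linarith [sub_eq_zero.mp h])
    · exact Or.inr (by linarith [sub_eq_zero.mp h])
  set f : equivClass ν0 2 c0 θ → (Fin V → Bool) :=
    fun p ℓ => decide (p.1 0 ℓ = θ 0 ℓ) with hf
  have hinj : Function.Injective f := by
    intro p q hpq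
    have h0 : ∀ ℓ, p.1 0 ℓ = q.1 0 ℓ := by
      intro ℓ
      have hiff : (p.1 0 ℓ = θ 0 ℓ) ↔ (q.1 0 ℓ = θ 0 ℓ) := by
        have := congrFun hpq ℓ
        simpa [hf] using this
      by_cases hP : p.1 0 ℓ = θ 0 ℓ
      · rw [hP, (hiff.mp hP)]
      · have hQ : ¬ q.1 0 ℓ = θ 0 ℓ := fun h => hP (hiff.mpr h)
        have h1 : p.1 0 ℓ = θ 1 ℓ := (hroot p.1 p.2 ℓ).resolve_left hP
        have h2 : q.1 0 ℓ = θ 1 ℓ := (hroot q.1 q.2 ℓ).resolve_left hQ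
        rw [h1, h2]
    have h1 : ∀ ℓ, p.1 1 ℓ = q.1 1 ℓ := by
      intro ℓ
      have hp := (hmem p.1 p.2).1 ℓ
      have hq' := (hmem q.1 q.2).1 ℓ
      have := h0 ℓ
      linarith
    apply Subtype.ext
    funext k ℓ
    fin_cases k
    · exact h0 ℓ
    · exact h1 ℓ
  have hfinS : Finite (equivClass ν0 2 c0 θ) := Finite.of_injective f hinj
  refine ⟨Set.finite_coe_iff.mp hfinS, ?_⟩
  calc Nat.card (equivClass ν0 2 c0 θ) ≤ Nat.card (Fin V → Bool) :=
        Nat.card_le_card_of_injective f hinj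
    _ = 2 ^ V := by simp [Nat.card_eq_fintype_card]

end TopicModel
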